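/- (Lemma 7, first part) Let ρ₁ ∈ ℝ, ρ₂ = −(2/√5)ρ₁, ρ₃ = (2√3/√10)ρ₁, and f = ρ₁e₁ + ρ₂e₂ + ρ₃e₃ ∈ ℝ⁴. Then Γ(f,f) = 0, where Γ(f,f) = (B/3)(f₁f₂ − 2f₀f₃)·(√2, −1, −1, √2). -/

import Mathlib

open Finset

/-- The linearized collision operator of the one-dimensional Broadwell model with
collision frequency `B`, as a `4 × 4` matrix. -/
noncomputable def LBmat (B : ℝ) : Matrix (Fin 4) (Fin 4) ℝ :=
  (-(B / 3)) • !![-2, Real.sqrt 2, Real.sqrt 2, -2;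
                  Real.sqrt 2, -1, -1, Real.sqrt 2;
                  Real.sqrt 2, -1, -1, Real.sqrt 2;
                  -2, Real.sqrt 2, Real.sqrt 2, -2]

/-- `e₁ = (√2/2, 0, 0, −√2/2)`. -/
noncomputable def eB1 : EuclideanSpace ℝ (Fin 4) :=
  WithLp.toLp 2 ![Real.sqrt 2 / 2, 0, 0, -(Real.sqrt 2 / 2)]

/-- `e₂ = (1/√10, 2/√5, 0, 1/√10)`. -/
noncomputable def eB2 : EuclideanSpace ℝ (Fin 4) :=
  WithLp.toLp 2 ![1 / Real.sqrt 10, 2 / Real.sqrt 5, 0, 1 / Real.sqrt 10]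

/-- `e₃ = (1/√15, −1/√30, √5/√6, 1/√15)`. -/
noncomputable def eB3 : EuclideanSpace ℝ (Fin 4) :=
  WithLp.toLp 2 ![1 / Real.sqrt 15, -(1 / Real.sqrt 30), Real.sqrt 5 / Real.sqrt 6, 1 / Real.sqrt 15]

/-- The quadratic term of the one-dimensional Broadwell model:
`Γ(f,f) = (B/3)(f₁f₂ − 2f₀f₃)·(√2, −1, −1, √2)`. -/
noncomputable def GamB (B : ℝ) (f : Fin 4 → ℝ) : Fin 4 → ℝ :=
  (B / 3 * (f 1 * f 2 - 2 * f 0 * f 3)) •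
    ![Real.sqrt 2, -1, -1, Real.sqrt 2]

/-- Lemma 7, first part: with `ρ₂ = −(2/√5)ρ₁`, `ρ₃ = (2√3/√10)ρ₁`
and `f = ρ₁e₁ + ρ₂e₂ + ρ₃e₃`, one has `Γ(f,f) = 0`. -/
theorem broadwell_Gam_eq_zero (B : ℝ) (hB : 0 < B) (ρ₁ ρ₂ ρ₃ : ℝ)
    (h2 : ρ₂ = -(2 / Real.sqrt 5) * ρ₁) (h3 : ρ₃ = 2 * Real.sqrt 3 / Real.sqrt 10 * ρ₁)
    (f : Fin 4 → ℝ) (hf : f = ρ₁ • eB1 + ρ₂ • eB2 + ρ₃ • eB3) :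
    GamB B f = 0 := by
  have s2 : Real.sqrt 2 > 0 := Real.sqrt_pos.mpr (by norm_num)
  have s3 : Real.sqrt 3 > 0 := Real.sqrt_pos.mpr (by norm_num)
  have s5 : Real.sqrt 5 > 0 := Real.sqrt_pos.mpr (by norm_num)
  have h6 : Real.sqrt 6 = Real.sqrt 2 * Real.sqrt 3 := by
    rw [← Real.sqrt_mul (by norm_num)]; norm_num
  have h10 : Real.sqrt 10 = Real.sqrt 2 * Real.sqrt 5 := by
    rw [← Real.sqrt_mul (by norm_num)]; norm_num
  have h15 : Real.sqrt 15 = Real.sqrt 3 * Real.sqrt 5 := by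
    rw [← Real.sqrt_mul (by norm_num)]; norm_num
  have h30 : Real.sqrt 30 = Real.sqrt 2 * (Real.sqrt 3 * Real.sqrt 5) := by
    rw [← Real.sqrt_mul (by norm_num), ← Real.sqrt_mul (by norm_num)]; norm_num
  have q2 : Real.sqrt 2 ^ 2 = 2 := Real.sq_sqrt (by norm_num)
  have q3 : Real.sqrt 3 ^ 2 = 3 := Real.sq_sqrt (by norm_num)
  have q5 : Real.sqrt 5 ^ 2 = 5 := Real.sq_sqrt (by norm_num)
  have key : f 1 * f 2 - 2 * f 0 * f 3 = 0 := by
    simp only [hf, h2, h3, eB1, eB2, eB3, PiLp.add_apply, PiLp.smul_apply, WithLp.ofLp_add, WithLp.ofLp_smul, WithLp.ofLp_toLp, Pi.add_apply, Pi.smul_apply,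
      Matrix.cons_val_zero, Matrix.cons_val_one, Matrix.head_cons, smul_eq_mul,
      Matrix.cons_val_two, Matrix.cons_val_three, Matrix.tail_cons, Matrix.head_fin_const]
    rw [h6, h10, h15, h30]
    field_simp
    ring_nf
    have e24 : Real.sqrt 2 ^ 4 = 4 := by rw [show Real.sqrt 2 ^ 4 = (Real.sqrt 2 ^ 2) ^ 2 by ring, q2]; norm_num
    have e26 : Real.sqrt 2 ^ 6 = 8 := by rw [show Real.sqrt 2 ^ 6 = (Real.sqrt 2 ^ 2) ^ 3 by ring, q2]; norm_num
    have e210 : Real.sqrt 2 ^ 10 = 32 := by rw [show Real.sqrt 2 ^ 10 = (Real.sqrt 2 ^ 2) ^ 5 by ring, q2]; norm_num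
    have e34 : Real.sqrt 3 ^ 4 = 9 := by rw [show Real.sqrt 3 ^ 4 = (Real.sqrt 3 ^ 2) ^ 2 by ring, q3]; norm_num
    have e59 : Real.sqrt 5 ^ 9 = 625 * Real.sqrt 5 := by
      rw [show Real.sqrt 5 ^ 9 = (Real.sqrt 5 ^ 2) ^ 4 * Real.sqrt 5 by ring, q5]; norm_num
    have e511 : Real.sqrt 5 ^ 11 = 3125 * Real.sqrt 5 := by
      rw [show Real.sqrt 5 ^ 11 = (Real.sqrt 5 ^ 2) ^ 5 * Real.sqrt 5 by ring, q5]; norm_num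
    simp only [e26, q2, show Real.sqrt 5 ^ 4 = (Real.sqrt 5 ^ 2) ^ 2 by ring, q5]
    ring
  simp [GamB, key]
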